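/- Let m ≥ 0 and let n, k be natural numbers with 0 ≤ k, n < 5^m. Then for all integers i, j with 0 ≤ j ≤ i ≤ 4, the prime 5 divides the fibonomial coefficient C(n + i·5^m, k + j·5^m)_F if and only if 5 divides C(n, k)_F. -/

import Mathlib

/-- The fibotorial `n!_F = F_n · F_{n-1} ⋯ F_1`, with `0!_F = 1`. -/
def fibotorial (n : ℕ) : ℕ := ∏ i ∈ Finset.range n, Nat.fib (i + 1)

/-- The fibonomial coefficient `C(n,k)_F = n!_F / (k!_F · (n-k)!_F)` for `k ≤ n`,
and `0` otherwise. -/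
def fibnomial (n k : ℕ) : ℕ :=
  if k ≤ n then fibotorial n / (fibotorial k * fibotorial (n - k)) else 0

open Nat

instance : Fact (Nat.Prime 5) := ⟨by norm_num⟩


/-- Cassini-type invariant. -/
lemma fibD_succ (n : ℕ) :
    ((fib (n+2) : ℤ)^2 - fib (n+2) * fib (n+1) - fib (n+1)^2)
      = -(((fib (n+1) : ℤ))^2 - fib (n+1) * fib n - (fib n)^2) := by
  have h : (fib (n+2) : ℤ) = fib n + fib (n+1) := by
    rw [fib_add_two]; push_cast; ring
  rw [h]; ring

lemma fibD_sq (n : ℕ) :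
    (((fib (n+1) : ℤ))^2 - fib (n+1) * fib n - (fib n)^2)^2 = 1 := by
  induction n with
  | zero => simp
  | succ m ih => rw [fibD_succ]; rw [neg_sq]; exact ih

lemma zfib_two_mul (n : ℕ) :
    (fib (2*n) : ℤ) = fib n * (2 * fib (n+1) - fib n) := by
  have h := fib_two_mul n
  have hle : fib n ≤ 2 * fib (n+1) :=
    le_trans fib_le_fib_succ (by omega)
  have : ((fib n * (2 * fib (n + 1) - fib n) : ℕ) : ℤ)
      = (fib n : ℤ) * (2 * fib (n+1) - fib n) := by
    push_cast [Nat.cast_sub hle]; ring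
  rw [h, this]

lemma zfib_two_mul_add_one (n : ℕ) :
    (fib (2*n+1) : ℤ) = (fib (n+1) : ℤ)^2 + (fib n : ℤ)^2 := by
  have h := fib_two_mul_add_one n
  exact_mod_cast congrArg (Nat.cast : ℕ → ℤ) h

/-- The key identity: `F_{5n} = F_n (25 F_n^4 + 25 D F_n^2 + 5 D^2)` with `D = (-1)^n`. -/
lemma zfib_five_mul (n : ℕ) :
    (fib (5*n) : ℤ) = fib n * (25 * (fib n : ℤ)^4
      + 25 * (((fib (n+1) : ℤ))^2 - fib (n+1) * fib n - (fib n)^2) * (fib n)^2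
      + 5 * (((fib (n+1) : ℤ))^2 - fib (n+1) * fib n - (fib n)^2)^2) := by
  cases n with
  | zero => simp
  | succ t =>
    set n := t + 1 with hn
    have h5 : 5 * n = 4 * n + t + 1 := by omega
    have hadd := fib_add (4*n) t
    have h4 : 4 * n = 2 * (2 * n) := by ring
    have hft : (fib t : ℤ) = fib (n+1) - fib n := by
      have : fib (t+2) = fib t + fib (t+1) := fib_add_two
      have : (fib (t+2) : ℤ) = fib t + fib (t+1) := by exact_mod_cast this
      rw [show n + 1 = t + 2 by omega, hn]; push_cast at this ⊢; linarith
    have e1 : (fib (5*n) : ℤ) = fib (4*n) * fib t + fib (4*n+1) * fib (t+1) := by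
      rw [h5, hadd]; push_cast; ring
    have e2 : (fib (4*n) : ℤ) = fib (2*n) * (2 * fib (2*n+1) - fib (2*n)) := by
      rw [h4]; exact zfib_two_mul (2*n)
    have e3 : (fib (4*n+1) : ℤ) = (fib (2*n+1) : ℤ)^2 + (fib (2*n) : ℤ)^2 := by
      rw [h4]; exact zfib_two_mul_add_one (2*n)
    have e4 := zfib_two_mul n
    have e5 := zfib_two_mul_add_one n
    rw [e1, e2, e3, e4, e5, hft, show t + 1 = n from rfl]
    ring



lemma not_five_dvd_fib {n : ℕ} (h : ¬ 5 ∣ n) : ¬ 5 ∣ fib n := by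
  intro hd
  have hg : Nat.gcd n 5 = 1 := by
    have h5 : Nat.gcd n 5 ∣ 5 := Nat.gcd_dvd_right n 5
    have hn : Nat.gcd n 5 ∣ n := Nat.gcd_dvd_left n 5
    rcases (Nat.Prime.eq_one_or_self_of_dvd (by norm_num) _ h5) with h1 | h1
    · exact h1
    · exact absurd (h1 ▸ hn) h
  have hfg := fib_gcd n 5
  rw [hg] at hfg
  have hdg : (5:ℕ) ∣ Nat.gcd (fib n) (fib 5) := Nat.dvd_gcd hd (by rw [show fib 5 = 5 from rfl])
  rw [← hfg] at hdg
  simp [show fib 1 = 1 from rfl] at hdg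

lemma padic_fib_five_mul {n : ℕ} (hn : n ≠ 0) :
    padicValNat 5 (fib (5*n)) = padicValNat 5 (fib n) + 1 := by
  have hfd : fib n ∣ fib (5*n) := fib_dvd n (5*n) ⟨5, by ring⟩
  set c := fib (5*n) / fib n with hc
  have hfnpos : 0 < fib n := fib_pos.mpr (by omega)
  have hmul : fib (5*n) = fib n * c := (Nat.mul_div_cancel' hfd).symm
  set D : ℤ := ((fib (n+1) : ℤ))^2 - fib (n+1) * fib n - (fib n)^2 with hD
  have hDsq : D^2 = 1 := fibD_sq n
  have hcz : (c : ℤ) = 25 * (fib n : ℤ)^4 + 25 * D * (fib n)^2 + 5 := by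
    have h1 : (fib n : ℤ) * c = (fib n : ℤ) *
        (25 * (fib n : ℤ)^4 + 25 * D * (fib n)^2 + 5) := by
      have := zfib_five_mul n
      rw [← hD, hDsq] at this
      rw [hmul] at this; push_cast at this; linarith [this]
    exact mul_left_cancel₀ (by exact_mod_cast hfnpos.ne') h1
  have h5c : (5:ℕ) ∣ c := by
    have : (5:ℤ) ∣ (c:ℤ) := by
      rw [hcz]; exact ⟨5 * (fib n : ℤ)^4 + 5 * D * (fib n)^2 + 1, by ring⟩
    exact_mod_cast this
  have hcpos : c ≠ 0 := by
    intro hc0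
    rw [hc0, Nat.mul_zero] at hmul
    have : 0 < fib (5*n) := fib_pos.mpr (by omega)
    omega
  have h25c : ¬ (5:ℕ)^2 ∣ c := by
    intro hdd
    have h25 : (25:ℤ) ∣ (c:ℤ) := by
      have : (25:ℕ) ∣ c := by norm_num at hdd; exact hdd
      exact_mod_cast this
    have : (25:ℤ) ∣ 5 := by
      have h2 : (25:ℤ) ∣ (c:ℤ) - (25 * (fib n : ℤ)^4 + 25 * D * (fib n)^2) :=
        dvd_sub h25 ⟨(fib n : ℤ)^4 + D * (fib n)^2, by ring⟩
      rw [hcz] at h2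
      simpa using h2
    norm_num at this
  have hvc : padicValNat 5 c = 1 := by
    have h1 : 1 ≤ padicValNat 5 c :=
      one_le_padicValNat_of_dvd hcpos h5c
    have h2 : ¬ 2 ≤ padicValNat 5 c := by
      intro h2
      exact h25c ((padicValNat_dvd_iff_le hcpos).mpr h2)
    omega
  rw [hmul, padicValNat.mul hfnpos.ne' hcpos, hvc]

lemma padic_fib : ∀ n : ℕ, n ≠ 0 → padicValNat 5 (fib n) = padicValNat 5 n := by
  intro n
  induction n using Nat.strong_induction_on with
  | _ n ih =>
    intro hn
    by_cases h5 : 5 ∣ n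
    · obtain ⟨m, rfl⟩ := h5
      have hm : m ≠ 0 := by rintro rfl; simp at hn
      rw [padic_fib_five_mul hm, ih m (by omega) hm,
        padicValNat.mul (by norm_num) hm, padicValNat_self]
      omega
    · rw [padicValNat.eq_zero_of_not_dvd (not_five_dvd_fib h5),
        padicValNat.eq_zero_of_not_dvd h5]





lemma fibotorial_succ (n : ℕ) : fibotorial (n+1) = fibotorial n * fib (n+1) :=
  Finset.prod_range_succ _ _

lemma fibotorial_pos (n : ℕ) : 0 < fibotorial n := by
  induction n with
  | zero => simp [fibotorial]
  | succ m ih => rw [fibotorial_succ]; exact Nat.mul_pos ih (fib_pos.mpr (by omega))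

lemma padic_fibotorial (n : ℕ) :
    padicValNat 5 (fibotorial n) = padicValNat 5 (n !) := by
  induction n with
  | zero => simp [fibotorial]
  | succ m ih =>
    rw [fibotorial_succ, factorial_succ,
      padicValNat.mul (fibotorial_pos m).ne' (fib_pos.mpr (by omega)).ne',
      padicValNat.mul (by omega) (factorial_pos m).ne', ih,
      padic_fib (m+1) (by omega)]
    omega

lemma fibotorial_mul_dvd : ∀ n k : ℕ, k ≤ n →
    fibotorial k * fibotorial (n - k) ∣ fibotorial n := by
  intro n
  induction n using Nat.strong_induction_on with
  | _ n ih =>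
    intro k hk
    rcases Nat.eq_zero_or_pos k with rfl | hk0
    · simp [fibotorial]
    rcases eq_or_lt_of_le hk with rfl | hkn
    · simp [fibotorial]
    -- 0 < k < n, so n = m + 1 with k ≤ m
    obtain ⟨m, rfl⟩ : ∃ m, n = m + 1 := ⟨n - 1, by omega⟩
    have hkm : k ≤ m := by omega
    -- fib (m+1) = fib k * fib (m-k) + fib (k+1) * fib (m-k+1)
    have hfib : fib (m+1) = fib k * fib (m - k) + fib (k+1) * fib (m - k + 1) := by
      have := fib_add k (m - k)
      rw [show k + (m - k) + 1 = m + 1 by omega] at this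
      exact this
    have hnk : m + 1 - k = (m - k) + 1 := by omega
    have h1 : fibotorial k * fibotorial (m + 1 - k) ∣ fibotorial m * fib (m - k + 1) := by
      rw [hnk, fibotorial_succ]
      have := ih m (by omega) k hkm
      calc fibotorial k * (fibotorial (m - k) * fib (m - k + 1))
          = (fibotorial k * fibotorial (m - k)) * fib (m - k + 1) := by ring
        _ ∣ fibotorial m * fib (m - k + 1) := mul_dvd_mul_right this _
    have h2 : fibotorial k * fibotorial (m + 1 - k) ∣ fib k * fibotorial m := by
      obtain ⟨k', rfl⟩ : ∃ k', k = k' + 1 := ⟨k - 1, by omega⟩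
      have hmk' : m - k' = m + 1 - (k' + 1) := by omega
      have := ih m (by omega) k' (by omega)
      rw [← hmk'] at *
      calc fibotorial (k'+1) * fibotorial (m - k')
          = (fibotorial k' * fibotorial (m - k')) * fib (k'+1) := by
            rw [fibotorial_succ]; ring
        _ ∣ fibotorial m * fib (k'+1) := mul_dvd_mul_right this _
        _ = fib (k'+1) * fibotorial m := by ring
    rw [fibotorial_succ, hfib, Nat.mul_add]
    refine dvd_add ?_ ?_
    · calc fibotorial k * fibotorial (m+1-k)
          ∣ (fib k * fibotorial m) * fib (m - k) := Dvd.dvd.mul_right h2 _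
        _ = fibotorial m * (fib k * fib (m - k)) := by ring
    · calc fibotorial k * fibotorial (m+1-k)
          ∣ (fibotorial m * fib (m - k + 1)) * fib (k+1) := Dvd.dvd.mul_right h1 _
        _ = fibotorial m * (fib (k+1) * fib (m - k + 1)) := by ring




lemma five_dvd_fibnomial_iff_choose (n k : ℕ) :
    5 ∣ fibnomial n k ↔ 5 ∣ Nat.choose n k := by
  by_cases hk : k ≤ n
  · have hdvd := fibotorial_mul_dvd n k hk
    have hfibn : fibnomial n k = fibotorial n / (fibotorial k * fibotorial (n-k)) :=
      if_pos hk
    have hne : fibnomial n k ≠ 0 := by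
      rw [hfibn]
      exact (Nat.div_pos (Nat.le_of_dvd (fibotorial_pos n) hdvd)
        (Nat.mul_pos (fibotorial_pos k) (fibotorial_pos (n-k)))).ne'
    have hcne : Nat.choose n k ≠ 0 := (Nat.choose_pos hk).ne'
    -- valuations
    have hvf : padicValNat 5 (fibnomial n k)
        = padicValNat 5 (fibotorial n) - (padicValNat 5 (fibotorial k) + padicValNat 5 (fibotorial (n-k))) := by
      rw [hfibn, padicValNat.div_of_dvd hdvd,
        padicValNat.mul (fibotorial_pos k).ne' (fibotorial_pos (n-k)).ne']
    have hvc : padicValNat 5 (n !) = padicValNat 5 (Nat.choose n k)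
        + (padicValNat 5 (k !) + padicValNat 5 ((n-k)!)) := by
      rw [← Nat.choose_mul_factorial_mul_factorial hk,
        padicValNat.mul (by positivity) (factorial_pos (n-k)).ne',
        padicValNat.mul hcne (factorial_pos k).ne']
      ring
    have heq : padicValNat 5 (fibnomial n k) = padicValNat 5 (Nat.choose n k) := by
      rw [hvf, padic_fibotorial n, padic_fibotorial k, padic_fibotorial (n-k)]
      omega
    rw [dvd_iff_padicValNat_ne_zero hne, dvd_iff_padicValNat_ne_zero hcne, heq]
  · rw [fibnomial, if_neg hk, Nat.choose_eq_zero_of_lt (by omega)]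

lemma five_dvd_choose_shift {m n k i j : ℕ} (hn : n < 5 ^ m) (hk : k < 5 ^ m)
    (hji : j ≤ i) (hi : i ≤ 4) :
    5 ∣ Nat.choose (n + i * 5 ^ m) (k + j * 5 ^ m) ↔ 5 ∣ Nat.choose n k := by
  have hp : (0:ℕ) < 5 ^ m := pow_pos (by norm_num) m
  set N := n + i * 5 ^ m
  set K := k + j * 5 ^ m
  have hNd : N / 5 ^ m = i := by
    rw [Nat.add_mul_div_right _ _ hp, Nat.div_eq_of_lt hn, Nat.zero_add]
  have hKd : K / 5 ^ m = j := by
    rw [Nat.add_mul_div_right _ _ hp, Nat.div_eq_of_lt hk, Nat.zero_add]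
  have hdig : ∀ t < m, N / 5 ^ t % 5 = n / 5 ^ t % 5 ∧ K / 5 ^ t % 5 = k / 5 ^ t % 5 := by
    intro t ht
    have h1 : ∀ a b : ℕ, (a + b * 5 ^ m) / 5 ^ t % 5 = a / 5 ^ t % 5 := by
      intro a b
      obtain ⟨s, hs⟩ : ∃ s, m = s + 1 + t := ⟨m - t - 1, by omega⟩
      have : b * 5 ^ m = (b * 5 ^ s * 5) * 5 ^ t := by rw [hs]; ring
      rw [this, Nat.add_mul_div_right _ _ (pow_pos (by norm_num) t),
        Nat.add_mul_mod_self_right]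
    exact ⟨h1 n i, h1 k j⟩
  have lucasN := Choose.choose_modEq_choose_mul_prod_range_choose (n := N) (k := K) (p := 5) m
  have lucasn := Choose.choose_modEq_choose_mul_prod_range_choose (n := n) (k := k) (p := 5) m
  rw [hNd, hKd] at lucasN
  rw [Nat.div_eq_of_lt hn, Nat.div_eq_of_lt hk, Nat.choose_self, Nat.cast_one, one_mul] at lucasn
  have hprodeq : (∏ t ∈ Finset.range m, (Nat.choose (N / 5 ^ t % 5) (K / 5 ^ t % 5) : ℤ))
      = ∏ t ∈ Finset.range m, (Nat.choose (n / 5 ^ t % 5) (k / 5 ^ t % 5) : ℤ) := by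
    refine Finset.prod_congr rfl ?_
    intro t ht
    rw [(hdig t (Finset.mem_range.mp ht)).1, (hdig t (Finset.mem_range.mp ht)).2]
  have key : (Nat.choose N K : ℤ) ≡ (Nat.choose i j : ℤ) * Nat.choose n k [ZMOD 5] := by
    calc (Nat.choose N K : ℤ)
        ≡ (Nat.choose i j : ℤ) * ∏ t ∈ Finset.range m, (Nat.choose (N / 5 ^ t % 5) (K / 5 ^ t % 5) : ℤ) [ZMOD 5] := by
          exact_mod_cast lucasN
      _ = (Nat.choose i j : ℤ) * ∏ t ∈ Finset.range m, (Nat.choose (n / 5 ^ t % 5) (k / 5 ^ t % 5) : ℤ) := by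
          rw [hprodeq]
      _ ≡ (Nat.choose i j : ℤ) * Nat.choose n k [ZMOD 5] := by
          have := Int.ModEq.mul_left (Nat.choose i j : ℤ) lucasn.symm
          exact_mod_cast this
  have hij : ¬ (5:ℤ) ∣ (Nat.choose i j : ℤ) := by
    have : ¬ (5:ℕ) ∣ Nat.choose i j := by
      interval_cases i <;> interval_cases j <;> decide
    exact_mod_cast this
  constructor
  · intro h
    have h' : (5:ℤ) ∣ (Nat.choose N K : ℤ) := by exact_mod_cast h
    have hd2 : (5:ℤ) ∣ (Nat.choose i j : ℤ) * Nat.choose n k := by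
      have hsub := key.dvd
      have := dvd_add h' hsub
      simpa using this
    rcases (Int.Prime.dvd_mul' (by norm_num) hd2) with h5 | h5
    · exact absurd h5 hij
    · exact_mod_cast h5
  · intro h
    have h' : (5:ℤ) ∣ ((Nat.choose i j : ℤ) * Nat.choose n k) :=
      Dvd.dvd.mul_left (by exact_mod_cast h) _
    have hsub := key.symm.dvd
    have h2 : (5:ℤ) ∣ (Nat.choose N K : ℤ) := by
      have := dvd_add h' hsub
      simpa using this
    exact_mod_cast h2

theorem five_dvd_fibnomial_shift (m n k : ℕ) (hn : n < 5 ^ m) (hk : k < 5 ^ m)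
    (i j : ℕ) (hji : j ≤ i) (hi : i ≤ 4) :
    5 ∣ fibnomial (n + i * 5 ^ m) (k + j * 5 ^ m) ↔ 5 ∣ fibnomial n k := by
  rw [five_dvd_fibnomial_iff_choose, five_dvd_fibnomial_iff_choose]
  exact five_dvd_choose_shift hn hk hji hi
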